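/- Let C be a nonempty closed convex subset of a real Hilbert space H, let β > 0, let φ : ℝ → ℝ be even, convex, and differentiable with a β-Lipschitzian derivative, and set h = φ ∘ d_C. Then h : H → ℝ is convex and Fréchet differentiable, and its gradient ∇h is Lipschitz continuous with constant β. -/

import Mathlib

open Set Metric
open scoped RealInnerProductSpace

/-- Tangent line inequality for a differentiable convex function on `ℝ`. -/
lemma tangent_line_le {f f' : ℝ → ℝ} (hconv : ConvexOn ℝ Set.univ f)
    (hd : ∀ t, HasDerivAt f (f' t) t) (a b : ℝ) :
    f a + f' a * (b - a) ≤ f b := by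
  rcases lt_trichotomy a b with hab | rfl | hba
  · have h1 := hconv.le_slope_of_hasDerivAt (mem_univ a) (mem_univ b) hab (hd a)
    rw [slope_def_field] at h1
    have hab' : 0 < b - a := by linarith
    calc f a + f' a * (b - a) ≤ f a + (f b - f a) / (b - a) * (b - a) := by
          nlinarith [mul_le_mul_of_nonneg_right h1 hab'.le]
      _ = f b := by field_simp; ring
  · simp
  · have h1 := hconv.slope_le_of_hasDerivAt (mem_univ b) (mem_univ a) hba (hd a)
    rw [slope_def_field] at h1
    have hab' : 0 < a - b := by linarith
    have := mul_le_mul_of_nonneg_right h1 hab'.le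
    rw [div_mul_cancel₀] at this
    · nlinarith
    · exact hab'.ne'

/-- Descent lemma for a function with `β`-Lipschitz derivative. -/
lemma descent_scalar {f f' : ℝ → ℝ} {β : ℝ}
    (hd : ∀ t, HasDerivAt f (f' t) t)
    (hlip : ∀ s t : ℝ, |f' t - f' s| ≤ β * |t - s|) (a b : ℝ) :
    f b ≤ f a + f' a * (b - a) + β / 2 * (b - a) ^ 2 := by
  set ψ : ℝ → ℝ := fun t => β / 2 * t ^ 2 - f t with hψ
  have hψd : ∀ t, HasDerivAt ψ (β * t - f' t) t := by
    intro t
    have h1 : HasDerivAt (fun t : ℝ => β / 2 * t ^ 2) (β / 2 * (2 * t)) t := by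
      simpa using (hasDerivAt_pow 2 t).const_mul (β / 2)
    have := h1.sub (hd t)
    have e : β * t - f' t = β / 2 * (2 * t) - f' t := by ring
    rw [e]
    exact this
  have hψdiff : Differentiable ℝ ψ := fun t => (hψd t).differentiableAt
  have hmono : Monotone (deriv ψ) := by
    intro s t hst
    rw [(hψd s).deriv, (hψd t).deriv]
    have := hlip s t
    rw [abs_sub_le_iff] at this
    have h2 : |t - s| = t - s := abs_of_nonneg (by linarith)
    rw [h2] at this
    linarith [this.1]
  have hψconv : ConvexOn ℝ Set.univ ψ := hmono.convexOn_univ_of_deriv hψdiff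
  have := tangent_line_le hψconv hψd a b
  simp only [hψ] at this
  nlinarith

/-- Let `C` be a nonempty closed convex subset of a real Hilbert space `H`,
`β > 0`, and `φ : ℝ → ℝ` even, convex, and differentiable with a `β`-Lipschitzian
derivative.  Then `h = φ ∘ d_C` is convex and Fréchet differentiable with a
`β`-Lipschitzian gradient. -/
theorem stmt_2 {H : Type*} [NormedAddCommGroup H] [InnerProductSpace ℝ H] [CompleteSpace H]
    (C : Set H) (hCne : C.Nonempty) (hCclosed : IsClosed C) (hCconv : Convex ℝ C)
    (β : ℝ) (hβ : 0 < β)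
    (φ : ℝ → ℝ) (heven : ∀ t, φ (-t) = φ t) (hconv : ConvexOn ℝ Set.univ φ)
    (φ' : ℝ → ℝ) (hderiv : ∀ t, HasDerivAt φ (φ' t) t)
    (hlip : LipschitzWith (Real.toNNReal β) φ')
    (h : H → ℝ) (hdef : ∀ x, h x = φ (Metric.infDist x C)) :
    ConvexOn ℝ Set.univ h ∧
    (∀ x, DifferentiableAt ℝ h x) ∧
    LipschitzWith (Real.toNNReal β) (fun x => gradient h x) := by
  -- notation
  set d : H → ℝ := fun x => Metric.infDist x C with hd
  have hdef' : ∀ x, h x = φ (d x) := hdef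
  -- Lipschitz in the real form
  have hlipR : ∀ s t : ℝ, |φ' t - φ' s| ≤ β * |t - s| := by
    intro s t
    have := hlip.dist_le_mul t s
    rw [Real.dist_eq, Real.dist_eq] at this
    rwa [Real.coe_toNNReal _ hβ.le] at this
  -- φ'(0) = 0
  have hφ'0 : φ' 0 = 0 := by
    have h1 : HasDerivAt (fun t : ℝ => φ (-t)) (φ' (-(0:ℝ)) * (-1)) 0 := by
      exact (hderiv (-(0:ℝ))).comp 0 (hasDerivAt_neg 0)
    have h2 : (fun t : ℝ => φ (-t)) = φ := funext heven
    rw [h2] at h1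
    have := h1.unique (hderiv 0)
    simp at this
    linarith
  -- tangent line
  have htan : ∀ a b : ℝ, φ a + φ' a * (b - a) ≤ φ b := tangent_line_le hconv hderiv
  -- descent
  have hdesc0 : ∀ a b : ℝ, φ b ≤ φ a + φ' a * (b - a) + β / 2 * (b - a) ^ 2 :=
    descent_scalar hderiv hlipR
  -- φ' a ≥ 0 for a ≥ 0
  have hφ'nonneg : ∀ a : ℝ, 0 ≤ a → 0 ≤ φ' a := by
    intro a ha
    rcases eq_or_lt_of_le ha with h0 | ha'
    · rw [← h0, hφ'0]
    · have h1 := htan a 0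
      have h2 := htan 0 a
      rw [hφ'0] at h2
      nlinarith
  -- φ' a ≤ β a for a ≥ 0
  have hφ'le : ∀ a : ℝ, 0 ≤ a → φ' a ≤ β * a := by
    intro a ha
    have := hlipR 0 a
    rw [hφ'0, sub_zero, sub_zero, abs_of_nonneg ha] at this
    exact (abs_le.mp this).2
  -- φ monotone on nonneg
  have hφmono : ∀ a b : ℝ, 0 ≤ a → a ≤ b → φ a ≤ φ b := by
    intro a b ha hab
    have := htan a b
    nlinarith [hφ'nonneg a ha]
  -- φ minimized at 0
  have hφmin : ∀ t : ℝ, φ 0 ≤ φ t := by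
    intro t
    have := htan 0 t
    rw [hφ'0] at this
    linarith
  -- projection
  have hproj : ∀ x : H, ∃ p ∈ C, ‖x - p‖ = d x ∧
      ∀ w ∈ C, ⟪x - p, w - p⟫ ≤ (0 : ℝ) := by
    intro x
    obtain ⟨p, hpC, hp⟩ := exists_norm_eq_iInf_of_complete_convex hCne
      (hCclosed.isComplete) hCconv x
    have hiInf : (⨅ w : C, ‖x - w‖) = Metric.infDist x C := by
      rw [Metric.infDist_eq_iInf]
      congr 1; ext w; rw [dist_eq_norm]
    refine ⟨p, hpC, hp.trans hiInf, ?_⟩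
    exact (norm_eq_iInf_iff_real_inner_le_zero hCconv hpC).mp hp
  choose P hPmem hPdist hPobt using hproj
  have hd_nonneg : ∀ x, 0 ≤ d x := fun x => Metric.infDist_nonneg
  have hd_le : ∀ (y : H) (w : H), w ∈ C → d y ≤ ‖y - w‖ := by
    intro y w hw
    rw [← dist_eq_norm]
    exact Metric.infDist_le_dist_of_mem hw
  -- the gradient candidate
  set F : H → H := fun x => if d x = 0 then 0 else (φ' (d x) / d x) • (x - P x) with hF
  have hFzero : ∀ x, d x = 0 → F x = 0 := by
    intro x hx; simp only [hF, if_pos hx]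
  have hFpos : ∀ x, d x ≠ 0 → F x = (φ' (d x) / d x) • (x - P x) := by
    intro x hx; simp only [hF, if_neg hx]
  -- subgradient inequality
  have hsub : ∀ x y : H, h x + ⟪F x, y - x⟫ ≤ h y := by
    intro x y
    rcases eq_or_lt_of_le (hd_nonneg x) with hx0 | hx0
    · rw [hFzero x hx0.symm, inner_zero_left, add_zero, hdef' x, hdef' y, ← hx0]
      exact hφmin _
    · have hx0' : d x ≠ 0 := hx0.ne'
      rw [hFpos x hx0']
      have hq := hPmem x
      have hdx : ‖x - P x‖ = d x := hPdist x
      -- key : ⟪x - P x, y - x⟫ ≤ d x * (d y - d x)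
      have hkey : ⟪x - P x, y - x⟫ ≤ d x * (d y - d x) := by
        have hsplit : y - x = (y - P y) + ((P y - P x) + (P x - x)) := by abel
        rw [hsplit, inner_add_right, inner_add_right]
        have h1 : ⟪x - P x, y - P y⟫ ≤ d x * d y := by
          calc ⟪x - P x, y - P y⟫ ≤ ‖x - P x‖ * ‖y - P y‖ := real_inner_le_norm _ _
            _ = d x * d y := by rw [hdx, hPdist y]
        have h2 : ⟪x - P x, P y - P x⟫ ≤ 0 := hPobt x (P y) (hPmem y)
        have h3 : ⟪x - P x, P x - x⟫ = -(d x)^2 := by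
          have : P x - x = -(x - P x) := by abel
          rw [this, inner_neg_right, real_inner_self_eq_norm_sq, hdx]
        rw [h3]
        nlinarith
      rw [real_inner_smul_left]
      have htl := htan (d x) (d y)
      rw [hdef' x, hdef' y]
      have hs := hφ'nonneg (d x) (hd_nonneg x)
      have : φ' (d x) / d x * ⟪x - P x, y - x⟫ ≤ φ' (d x) * (d y - d x) := by
        rw [div_mul_eq_mul_div, div_le_iff₀ hx0]
        calc φ' (d x) * ⟪x - P x, y - x⟫ ≤ φ' (d x) * (d x * (d y - d x)) :=
              mul_le_mul_of_nonneg_left hkey hs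
          _ = φ' (d x) * (d y - d x) * d x := by ring
      linarith
  -- descent inequality
  have hdescent : ∀ x y : H, h y ≤ h x + ⟪F x, y - x⟫ + β / 2 * ‖y - x‖ ^ 2 := by
    intro x y
    rcases eq_or_lt_of_le (hd_nonneg x) with hx0 | hx0
    · rw [hFzero x hx0.symm, inner_zero_left, hdef' x, hdef' y, ← hx0]
      have hxC : x ∈ C := (hCclosed.mem_iff_infDist_zero hCne).mpr hx0.symm
      have h1 : d y ≤ ‖y - x‖ := hd_le y x hxC
      have h2 : φ (d y) ≤ φ ‖y - x‖ := hφmono _ _ (hd_nonneg y) h1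
      have h3 := hdesc0 0 ‖y - x‖
      rw [hφ'0] at h3
      have h4 : ‖y - x‖ - 0 = ‖y - x‖ := by ring
      rw [h4] at h3
      linarith
    · have hx0' : d x ≠ 0 := hx0.ne'
      rw [hFpos x hx0']
      set q := P x with hq
      set a := d x with ha
      set b := ‖y - q‖ with hb
      have hdx : ‖x - q‖ = a := hPdist x
      have hbnn : 0 ≤ b := norm_nonneg _
      -- step 1 : h y ≤ φ b
      have hs1 : h y ≤ φ b := by
        rw [hdef' y]
        exact hφmono _ _ (hd_nonneg y) (hd_le y q (hPmem x))
      -- step 2 : scalar descent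
      have hs2 : φ b ≤ φ a + φ' a * (b - a) + β / 2 * (b - a) ^ 2 := hdesc0 a b
      -- step 3
      set T : ℝ := ⟪x - q, y - q⟫ with hT
      have hCS : T ≤ a * b := by
        calc T ≤ ‖x - q‖ * ‖y - q‖ := real_inner_le_norm _ _
          _ = a * b := by rw [hdx]
      have hinner : ⟪x - q, y - x⟫ = T - a ^ 2 := by
        have : y - x = (y - q) - (x - q) := by abel
        rw [this, inner_sub_right, real_inner_self_eq_norm_sq, hdx]
      have hnorm : ‖y - x‖ ^ 2 = b ^ 2 - 2 * T + a ^ 2 := by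
        have h5 : y - x = (y - q) - (x - q) := by abel
        rw [h5, @norm_sub_sq_real, hdx, real_inner_comm]
      rw [real_inner_smul_left, hinner, hnorm, hdef' x]
      have hble : φ' a ≤ β * a := hφ'le a (hd_nonneg x)
      have hfact : 0 ≤ (a * b - T) * (β * a - φ' a) :=
        mul_nonneg (by linarith) (by linarith)
      have hdiff : (φ' a / a * (T - a ^ 2) + β / 2 * (b ^ 2 - 2 * T + a ^ 2))
          - (φ' a * (b - a) + β / 2 * (b - a) ^ 2)
          = (a * b - T) * (β * a - φ' a) / a := by
        field_simp
        ring
      have hdiv : 0 ≤ (a * b - T) * (β * a - φ' a) / a := div_nonneg hfact hx0.le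
      linarith
  -- sandwich: |h y - h x - ⟪F x, y - x⟫| ≤ β/2 ‖y-x‖²
  have hsand : ∀ x y : H, |h y - h x - ⟪F x, y - x⟫| ≤ β / 2 * ‖y - x‖ ^ 2 := by
    intro x y
    rw [abs_le]
    constructor
    · have := hsub x y
      nlinarith [sq_nonneg ‖y - x‖]
    · have := hdescent x y
      linarith
  -- h has gradient F x at every x
  have hgrad : ∀ x : H, HasGradientAt h (F x) x := by
    intro x
    rw [hasGradientAt_iff_hasFDerivAt]
    rw [hasFDerivAt_iff_isLittleO_nhds_zero]
    rw [Asymptotics.isLittleO_iff]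
    intro c hc
    rw [Metric.eventually_nhds_iff]
    refine ⟨2 * c / β, by positivity, ?_⟩
    intro z hz
    rw [dist_zero_right] at hz
    have h1 := hsand x (x + z)
    have h2 : (x + z) - x = z := by abel
    rw [h2] at h1
    have h3 : (InnerProductSpace.toDual ℝ H) (F x) z = ⟪F x, z⟫ :=
      InnerProductSpace.toDual_apply_apply
    rw [Real.norm_eq_abs, h3]
    calc |h (x + z) - h x - ⟪F x, z⟫| ≤ β / 2 * ‖z‖ ^ 2 := h1
      _ = β / 2 * ‖z‖ * ‖z‖ := by ring
      _ ≤ c * ‖z‖ := by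
          have hbz : β * ‖z‖ ≤ 2 * c := by
            calc β * ‖z‖ ≤ β * (2 * c / β) := mul_le_mul_of_nonneg_left hz.le hβ.le
              _ = 2 * c := by field_simp
          have : β / 2 * ‖z‖ ≤ c := by linarith
          exact mul_le_mul_of_nonneg_right this (norm_nonneg z)
  have hgradeq : ∀ x : H, gradient h x = F x := fun x => (hgrad x).gradient
  refine ⟨?_, fun x => (hgrad x).differentiableAt, ?_⟩
  · -- convexity from the subgradient inequality
    refine ⟨convex_univ, ?_⟩
    intro x _ y _ a b ha hb hab
    set z := a • x + b • y with hz
    have h1 := hsub z x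
    have h2 := hsub z y
    have e : a • (x - z) + b • (y - z) = 0 := by
      have e1 : a • (x - z) + b • (y - z) = (a • x + b • y) - (a + b) • z := by
        rw [add_smul, smul_sub, smul_sub]; abel
      rw [e1, hab, one_smul, hz, sub_self]
    have h3 : a * ⟪F z, x - z⟫ + b * ⟪F z, y - z⟫ = 0 := by
      rw [← real_inner_smul_right, ← real_inner_smul_right, ← inner_add_right, e,
        inner_zero_right]
    have h4 := mul_le_mul_of_nonneg_left h1 ha
    have h5 := mul_le_mul_of_nonneg_left h2 hb
    have h6 : a * h z + b * h z = h z := by rw [← add_mul, hab, one_mul]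
    simp only [smul_eq_mul]
    nlinarith [h4, h5, h3, h6]
  · -- Lipschitz gradient
    have key : ∀ x y : H, h x - h y ≤ ⟪F x, x - y⟫ - β⁻¹ / 2 * ‖F y - F x‖ ^ 2 := by
      intro x y
      set v := F y - F x with hv
      set z := y - β⁻¹ • v with hz
      have h1 := hsub x z
      have h2 := hdescent y z
      have e1 : z - y = -(β⁻¹ • v) := by rw [hz]; abel
      have e2 : z - x = (y - x) - β⁻¹ • v := by rw [hz]; abel
      have h3 : ⟪F y, z - y⟫ = -(β⁻¹ * ⟪F y, v⟫) := by
        rw [e1, inner_neg_right, real_inner_smul_right]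
      have h4 : ‖z - y‖ ^ 2 = β⁻¹ ^ 2 * ‖v‖ ^ 2 := by
        rw [e1, norm_neg, norm_smul, Real.norm_eq_abs,
          abs_of_nonneg (by positivity : (0:ℝ) ≤ β⁻¹), mul_pow]
      have h5 : ⟪F x, z - x⟫ = -⟪F x, x - y⟫ - β⁻¹ * ⟪F x, v⟫ := by
        rw [e2, inner_sub_right, real_inner_smul_right]
        congr 1
        rw [← inner_neg_right]
        congr 1
        abel
      have h6 : ⟪F y, v⟫ - ⟪F x, v⟫ = ‖v‖ ^ 2 := by
        rw [← inner_sub_left, ← hv, real_inner_self_eq_norm_sq]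
      have h6' : β⁻¹ * ⟪F y, v⟫ - β⁻¹ * ⟪F x, v⟫ = β⁻¹ * ‖v‖ ^ 2 := by
        rw [← mul_sub, h6]
      have e4 : β / 2 * (β⁻¹ ^ 2 * ‖v‖ ^ 2) = β⁻¹ / 2 * ‖v‖ ^ 2 := by
        field_simp
      rw [h5] at h1
      rw [h3, h4, e4] at h2
      linarith [h1, h2, h6']
    have main : ∀ x y : H, ‖F x - F y‖ ≤ β * ‖x - y‖ := by
      intro x y
      have k1 := key x y
      have k2 := key y x
      set v := F y - F x with hv
      have e3 : F x - F y = -v := by rw [hv]; abel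
      rw [e3, norm_neg] at k2
      have h8 : ⟪F x, x - y⟫ + ⟪F y, y - x⟫ = -⟪v, x - y⟫ := by
        have e5 : y - x = -(x - y) := by abel
        rw [e5, inner_neg_right, ← sub_eq_add_neg, ← inner_sub_left, e3, inner_neg_left]
      have h10 : β⁻¹ * ‖v‖ ^ 2 ≤ -⟪v, x - y⟫ := by linarith
      have h11 : -⟪v, x - y⟫ ≤ ‖v‖ * ‖x - y‖ := by
        have := real_inner_le_norm (-v) (x - y)
        rwa [inner_neg_left, norm_neg] at this
      have h13 : β⁻¹ * ‖v‖ ^ 2 ≤ ‖v‖ * ‖x - y‖ := h10.trans h11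
      rw [e3, norm_neg]
      rcases eq_or_lt_of_le (norm_nonneg v) with hv0 | hv0
      · rw [← hv0]; positivity
      · have hb1 : β * β⁻¹ = 1 := mul_inv_cancel₀ hβ.ne'
        nlinarith [mul_le_mul_of_nonneg_left h13 hβ.le, hb1, hv0, mul_pos hv0 hv0]
    apply LipschitzWith.of_dist_le_mul
    intro x y
    rw [Real.coe_toNNReal _ hβ.le, dist_eq_norm, dist_eq_norm]
    simp only [hgradeq]
    exact main x y
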